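/- Let A be the nilpotent matrix defined in block form as in equation (2.33) of the paper: A is block lower-bidiagonal with zero diagonal blocks of sizes r₁,...,r_{n−1}, N, ℓ_{n−1},...,ℓ₁ (where r_i ≤ r_{i+1} for all i, r_{n−1} ≤ N, ℓ_{i+1} ≤ ℓ_i) and subdiagonal blocks R_i = [[I_{r_i}],[0]] (size r_{i+1}×r_i for i ≤ n−2), R_{n−1} = [[I_{r_{n−1}}],[0]] (size N×r_{n−1}), S of size ℓ_{n−1}×N with S = [[I_{m−e}, 0],[0, 0]] where m−e ≥ r_{n−1}, and L_i = [[I_{ℓ_{i+1}}],[0]] (size ℓ_i×ℓ_{i+1}). If r₁ > 0, then A^{2n−2} ≠ 0; in fact rank(A^{2n−2}) ≥ r₁. -/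

import Mathlib

open Matrix

/-- Sizes of the diagonal blocks: `r₁, ..., r_{n−1}, N, ℓ_{n−1}, ..., ℓ₁`
(0-indexed: block `j` for `j < n−1` has size `r j`, block `n−1` has size `N`,
block `j` for `j ≥ n` has size `l (2n−2−j)`). -/
def blkSize (n N : ℕ) (r l : ℕ → ℕ) (j : ℕ) : ℕ :=
  if j < n - 1 then r j else if j = n - 1 then N else l (2 * n - 2 - j)

/-- Size of the identity in the subdiagonal block below diagonal block `j`:
it is `m − e` for the block `S` (at `j = n−1`), and the size of the source block
otherwise. -/
def idSize (n N m e : ℕ) (r l : ℕ → ℕ) (j : ℕ) : ℕ :=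
  if j = n - 1 then m - e else blkSize n N r l j

/-- Partial sums of the block sizes. -/
def blkStart (n N : ℕ) (r l : ℕ → ℕ) (j : ℕ) : ℕ :=
  ∑ u ∈ Finset.range j, blkSize n N r l u

/-- The nilpotent matrix `A` of equation (2.33): block lower bidiagonal with zero diagonal
blocks and subdiagonal blocks `R₁, ..., R_{n−1}, S, L_{n−1}, ..., L₂`, each of which is a
matrix with an identity block of the prescribed size in the upper-left corner and zeros
elsewhere. -/
noncomputable def Amat (F : Type*) [Field F] (n N m e : ℕ) (r l : ℕ → ℕ) :
    Matrix (Fin (blkStart n N r l (2 * n - 1))) (Fin (blkStart n N r l (2 * n - 1))) F :=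
  open scoped Classical in
  Matrix.of fun p q =>
    if ∃ j ∈ Finset.range (2 * n - 2),
        blkStart n N r l j ≤ (q : ℕ) ∧
        (q : ℕ) - blkStart n N r l j < idSize n N m e r l j ∧
        (p : ℕ) = blkStart n N r l (j + 1) + ((q : ℕ) - blkStart n N r l j)
    then 1 else 0

lemma blkStart_succ (n N : ℕ) (r l : ℕ → ℕ) (j : ℕ) :
    blkStart n N r l (j + 1) = blkStart n N r l j + blkSize n N r l j :=
  Finset.sum_range_succ _ _

lemma blkStart_mono (n N : ℕ) (r l : ℕ → ℕ) {j j' : ℕ} (h : j ≤ j') :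
    blkStart n N r l j ≤ blkStart n N r l j' :=
  Finset.sum_le_sum_of_subset (Finset.range_subset_range.2 h)

/-- if `r₁ > 0` then `A^{2n−2} ≠ 0`; in fact `rank(A^{2n−2}) ≥ r₁`. -/
theorem Amat_power_ne_zero (F : Type*) [Field F] (n N m e : ℕ) (r l : ℕ → ℕ)
    (hn : 2 ≤ n)
    (hrmono : ∀ j, j + 1 < n - 1 → r j ≤ r (j + 1))
    (hrN : r (n - 2) ≤ N)
    (hlmono : ∀ j, j + 1 < n - 1 → l (j + 1) ≤ l j)
    (hme1 : m - e ≤ N) (hme2 : m - e ≤ l (n - 2)) (hme3 : r (n - 2) ≤ m - e)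
    (hr1 : 0 < r 0) :
    Amat F n N m e r l ^ (2 * n - 2) ≠ 0 ∧
    r 0 ≤ (Amat F n N m e r l ^ (2 * n - 2)).rank := by
  classical
  set D := blkStart n N r l (2 * n - 1) with hDdef
  set A := Amat F n N m e r l with hAdef
  -- `r 0 ≤ r k` for `k ≤ n - 2`
  have hr0 : ∀ k, k ≤ n - 2 → r 0 ≤ r k := by
    intro k hk
    induction k with
    | zero => exact le_rfl
    | succ k ih => exact le_trans (ih (by omega)) (hrmono k (by omega))
  -- `m - e ≤ l k` for `k ≤ n - 2`
  have hl0 : ∀ k, k ≤ n - 2 → m - e ≤ l k := by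
    have H : ∀ d k, k + d = n - 2 → m - e ≤ l k := by
      intro d
      induction d with
      | zero => intro k hk; rw [show k = n - 2 by omega]; exact hme2
      | succ d ih =>
        intro k hk
        exact le_trans (ih (k + 1) (by omega)) (hlmono k (by omega))
    intro k hk
    exact H (n - 2 - k) k (by omega)
  have hr02 : r 0 ≤ m - e := le_trans (hr0 (n - 2) le_rfl) hme3
  -- `r 0` is at most every block size
  have hrb : ∀ j, j ≤ 2 * n - 2 → r 0 ≤ blkSize n N r l j := by
    intro j hj
    unfold blkSize
    split_ifs with h1 h2
    · exact hr0 j (by omega)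
    · exact le_trans hr02 hme1
    · exact le_trans hr02 (hl0 (2 * n - 2 - j) (by omega))
  -- `r 0` is at most every identity-block size
  have hri : ∀ j, j < 2 * n - 2 → r 0 ≤ idSize n N m e r l j := by
    intro j hj
    unfold idSize
    split_ifs with h1
    · exact hr02
    · exact hrb j (by omega)
  -- identity blocks fit inside the diagonal blocks
  have hib : ∀ j, idSize n N m e r l j ≤ blkSize n N r l j := by
    intro j
    unfold idSize blkSize
    split_ifs with h1 h2 <;> first | exact hme1 | omega | exact le_rfl
  -- key computation: the `t`-th column of `A^k`
  have key : ∀ k, k ≤ 2 * n - 2 → ∀ t : ℕ, t < r 0 → ∀ p q : Fin D, (q : ℕ) = t →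
      (A ^ k) p q = if (p : ℕ) = blkStart n N r l k + t then (1 : F) else 0 := by
    intro k
    induction k with
    | zero =>
      intro _ t ht p q hq
      have h0 : blkStart n N r l 0 = 0 := by simp [blkStart]
      rw [pow_zero, Matrix.one_apply]
      simp [Fin.ext_iff, hq, h0]
    | succ k ih =>
      intro hk t ht p q hq
      have hkle : k ≤ 2 * n - 2 := by omega
      have hsz : t < blkSize n N r l k := lt_of_lt_of_le ht (hrb k hkle)
      have hlt : blkStart n N r l k + t < D := by
        have h1 := blkStart_succ n N r l k
        have h2 := blkStart_mono n N r l (show k + 1 ≤ 2 * n - 1 by omega)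
        omega
      set s0 : Fin D := ⟨blkStart n N r l k + t, hlt⟩ with hs0
      have hAk : ∀ s : Fin D, (A ^ k) s q = if s = s0 then (1 : F) else 0 := by
        intro s
        rw [ih hkle t ht s q hq]
        exact if_congr (by simp [Fin.ext_iff, hs0]) rfl rfl
      rw [pow_succ', Matrix.mul_apply]
      simp_rw [hAk, mul_ite, mul_one, mul_zero,
        Finset.sum_ite_eq', Finset.mem_univ, if_true]
      show (Amat F n N m e r l) p s0 = _
      rw [Amat, Matrix.of_apply]
      by_cases hp : (p : ℕ) = blkStart n N r l (k + 1) + t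
      · rw [if_pos, if_pos hp]
        refine ⟨k, Finset.mem_range.2 (by omega), Nat.le_add_right _ _, ?_, ?_⟩
        · have : (↑s0 : ℕ) - blkStart n N r l k = t := by simp [hs0]
          rw [this]; exact lt_of_lt_of_le ht (hri k (by omega))
        · have : (↑s0 : ℕ) - blkStart n N r l k = t := by simp [hs0]
          rw [this, hp]
      · rw [if_neg, if_neg hp]
        rintro ⟨j, hj, h1, h2, h3⟩
        rw [Finset.mem_range] at hj
        have hs0v : (↑s0 : ℕ) = blkStart n N r l k + t := rfl
        have hjk : j = k := by
          rcases lt_trichotomy j k with h | h | h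
          · have e1 := blkStart_mono n N r l (show j + 1 ≤ k by omega)
            have e2 := blkStart_succ n N r l j
            have e3 := hib j
            omega
          · exact h
          · have e1 := blkStart_mono n N r l (show k + 1 ≤ j by omega)
            have e2 := blkStart_succ n N r l k
            omega
        subst hjk
        rw [hs0v, Nat.add_sub_cancel_left] at h3
        exact hp h3
  -- the picking matrices
  have hDpos : r 0 ≤ D := by
    have h1 : blkStart n N r l 1 = blkStart n N r l 0 + blkSize n N r l 0 :=
      blkStart_succ n N r l 0
    have h2 := blkStart_mono n N r l (show 1 ≤ 2 * n - 1 by omega)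
    have h3 := hrb 0 (by omega)
    have h0 : blkStart n N r l 0 = 0 := by simp [blkStart]
    omega
  have hrowlt : ∀ t : Fin (r 0), blkStart n N r l (2 * n - 2) + (t : ℕ) < D := by
    intro t
    have h1 := blkStart_succ n N r l (2 * n - 2)
    have h2 : 2 * n - 2 + 1 = 2 * n - 1 := by omega
    have h3 := hrb (2 * n - 2) le_rfl
    have h4 := t.isLt
    rw [h2] at h1
    omega
  set P : Matrix (Fin (r 0)) (Fin D) F :=
    Matrix.of fun t p => if (p : ℕ) = blkStart n N r l (2 * n - 2) + (t : ℕ) then 1 else 0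
    with hP
  set Q : Matrix (Fin D) (Fin (r 0)) F :=
    Matrix.of fun q t => if (q : ℕ) = (t : ℕ) then 1 else 0 with hQ
  have hPMQ : P * (A ^ (2 * n - 2) * Q) = 1 := by
    ext t t'
    have hqlt : (t' : ℕ) < D := lt_of_lt_of_le t'.isLt hDpos
    set q0 : Fin D := ⟨(t' : ℕ), hqlt⟩ with hq0
    have hMQ : ∀ p : Fin D, (A ^ (2 * n - 2) * Q) p t' =
        if (p : ℕ) = blkStart n N r l (2 * n - 2) + (t' : ℕ) then (1 : F) else 0 := by
      intro p
      rw [Matrix.mul_apply]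
      have hQcol : ∀ s : Fin D, Q s t' = if s = q0 then (1 : F) else 0 := by
        intro s
        rw [hQ, Matrix.of_apply]
        exact if_congr (by simp [Fin.ext_iff, hq0]) rfl rfl
      simp_rw [hQcol, mul_ite, mul_one, mul_zero,
        Finset.sum_ite_eq', Finset.mem_univ, if_true]
      exact key (2 * n - 2) le_rfl (t' : ℕ) t'.isLt p q0 rfl
    set p0 : Fin D := ⟨blkStart n N r l (2 * n - 2) + (t' : ℕ), hrowlt t'⟩ with hp0
    rw [Matrix.mul_apply]
    have hterm : ∀ p : Fin D, P t p * (A ^ (2 * n - 2) * Q) p t' =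
        if p = p0 then P t p0 else 0 := by
      intro p
      rw [hMQ p]
      by_cases h : p = p0
      · subst h; simp [hp0]
      · rw [if_neg (by simpa [Fin.ext_iff, hp0] using h), if_neg h, mul_zero]
    simp_rw [hterm, Finset.sum_ite_eq' Finset.univ p0, Finset.mem_univ, if_true]
    rw [hP, Matrix.of_apply, Matrix.one_apply]
    exact if_congr (by simp [Fin.ext_iff, hp0]; omega) rfl rfl
  have hrank : r 0 ≤ (A ^ (2 * n - 2)).rank := by
    have h1 : (P * (A ^ (2 * n - 2) * Q)).rank = r 0 := by
      rw [hPMQ, Matrix.rank_one, Fintype.card_fin]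
    calc r 0 = (P * (A ^ (2 * n - 2) * Q)).rank := h1.symm
      _ ≤ (A ^ (2 * n - 2) * Q).rank := Matrix.rank_mul_le_right _ _
      _ ≤ (A ^ (2 * n - 2)).rank := Matrix.rank_mul_le_left _ _
  refine ⟨?_, hrank⟩
  intro h0
  rw [h0, Matrix.rank_zero] at hrank
  omega
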